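/- Let α > 0 and 1 ≤ k. Then (1/Γ((k+1)/2)) ∫_0^r (r-s)^{(k-1)/2} s^{α-1} (1-s)^{-α-(k+1)/2} ds = (Γ(α)/Γ(α+(k+1)/2)) · r^{α+(k-1)/2} (1-r)^{-α} for all 0 < r < 1. -/

import Mathlib

open MeasureTheory Set

lemma real_beta {a b : ℝ} (ha : 0 < a) (hb : 0 < b) :
    ∫ x in (0:ℝ)..1, x ^ (a - 1) * (1 - x) ^ (b - 1) =
      Real.Gamma a * Real.Gamma b / Real.Gamma (a + b) := by
  have hab : 0 < a + b := by linarith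
  have h := Complex.Gamma_mul_Gamma_eq_betaIntegral
    (s := (a:ℂ)) (t := (b:ℂ)) (by simpa using ha) (by simpa using hb)
  have hb2 : Complex.betaIntegral a b =
      ((∫ x in (0:ℝ)..1, x ^ (a - 1) * (1 - x) ^ (b - 1) : ℝ) : ℂ) := by
    rw [Complex.betaIntegral, ← intervalIntegral.integral_ofReal]
    refine intervalIntegral.integral_congr fun x hx => ?_
    rw [uIcc_of_le (by norm_num : (0:ℝ) ≤ 1)] at hx
    rw [Complex.ofReal_mul, Complex.ofReal_cpow hx.1,
      Complex.ofReal_cpow (by linarith [hx.2] : (0:ℝ) ≤ 1 - x)]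
    push_cast
    ring
  rw [hb2, Complex.Gamma_ofReal, Complex.Gamma_ofReal, ← Complex.ofReal_add,
    Complex.Gamma_ofReal, ← Complex.ofReal_mul, ← Complex.ofReal_mul] at h
  have h' := Complex.ofReal_inj.mp h
  rw [eq_div_iff (Real.Gamma_pos_of_pos hab).ne']
  linarith [h']

lemma pointwise_chord (α c r w : ℝ) (hr0 : 0 < r) (hr1 : r < 1) (hw0 : 0 < w) (hw1 : w < 1) :
    r * (1 - r) / (1 - r + r * w) ^ 2 *
      ((r * (1 - r) * (1 - w) / (1 - r + r * w)) ^ (c - 1) *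
        (r * w / (1 - r + r * w)) ^ (α - 1) *
        ((1 - r) / (1 - r + r * w)) ^ (-α - c)) =
    r ^ (α + c - 1) * (1 - r) ^ (-α) * (w ^ (α - 1) * (1 - w) ^ (c - 1)) := by
  have h1r : (0:ℝ) < 1 - r := by linarith
  have h1w : (0:ℝ) < 1 - w := by linarith
  have hD : (0:ℝ) < 1 - r + r * w := by positivity
  rw [Real.div_rpow (by positivity) hD.le, Real.div_rpow (by positivity) hD.le,
    Real.div_rpow h1r.le hD.le, Real.mul_rpow (by positivity) h1w.le,
    Real.mul_rpow hr0.le h1r.le, Real.mul_rpow hr0.le hw0.le]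
  rw [show (1 - r + r*w)^2 = Real.exp (Real.log (1-r+r*w) * 2) by
    rw [← Real.rpow_natCast (1-r+r*w) 2, Real.rpow_def_of_pos hD]; norm_num]
  simp only [Real.rpow_def_of_pos hr0, Real.rpow_def_of_pos h1r, Real.rpow_def_of_pos hw0,
    Real.rpow_def_of_pos h1w, Real.rpow_def_of_pos hD]
  rw [show r * (1-r) = Real.exp (Real.log r + Real.log (1-r)) by
    rw [Real.exp_add, Real.exp_log hr0, Real.exp_log h1r]]
  simp only [← Real.exp_add, ← Real.exp_sub]
  rw [Real.exp_eq_exp]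
  ring

theorem chord_example_fractional_integral (k : ℕ) (hk : 1 ≤ k) (α : ℝ) (hα : 0 < α)
    (r : ℝ) (hr0 : 0 < r) (hr1 : r < 1) :
    (1 / Real.Gamma (((k : ℝ) + 1) / 2)) *
      ∫ s in (0:ℝ)..r,
        (r - s) ^ (((k : ℝ) - 1) / 2) * s ^ (α - 1) * (1 - s) ^ (-α - ((k : ℝ) + 1) / 2) =
    Real.Gamma α / Real.Gamma (α + ((k : ℝ) + 1) / 2) *
      (r ^ (α + ((k : ℝ) - 1) / 2) * (1 - r) ^ (-α)) := by
  have h1r : (0:ℝ) < 1 - r := by linarith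
  set c : ℝ := ((k:ℝ) + 1) / 2 with hcdef
  have hc : (0:ℝ) < c := by positivity
  have hck1 : ((k:ℝ) - 1) / 2 = c - 1 := by rw [hcdef]; ring
  rw [hck1, show α + (c - 1) = α + c - 1 from by ring]
  have hφderiv : ∀ w ∈ Ioo (0:ℝ) 1, HasDerivWithinAt (fun w => r*w/(1-r+r*w))
      (r*(1-r)/(1-r+r*w)^2) (Ioo (0:ℝ) 1) w := by
    intro w hw
    have hD : (0:ℝ) < 1 - r + r * w := by nlinarith [hw.1, hw.2]
    have h := (((hasDerivAt_id w).const_mul r).div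
      (((hasDerivAt_id w).const_mul r).const_add (1-r)) hD.ne')
    have h' : HasDerivAt (fun w => r*w/(1-r+r*w)) (r*(1-r)/(1-r+r*w)^2) w := by
      exact h.congr_deriv (by simp only [id]; ring)
    exact h'.hasDerivWithinAt
  have hinj : InjOn (fun w => r*w/(1-r+r*w)) (Ioo (0:ℝ) 1) := by
    intro w1 h1 w2 h2 heq
    have hD1 : (0:ℝ) < 1 - r + r * w1 := by nlinarith [h1.1, h1.2]
    have hD2 : (0:ℝ) < 1 - r + r * w2 := by nlinarith [h2.1, h2.2]
    simp only at heq
    field_simp at heq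
    have h3 : r * (1 - r) * (w1 - w2) = 0 := by linear_combination r * heq
    have h4 : w1 - w2 = 0 := by
      rcases mul_eq_zero.mp h3 with h | h
      · exact absurd h (by positivity)
      · exact h
    linarith
  have himg : (fun w => r*w/(1-r+r*w)) '' Ioo (0:ℝ) 1 = Ioo 0 r := by
    ext s
    constructor
    · rintro ⟨w, ⟨hw0, hw1⟩, rfl⟩
      have hD : (0:ℝ) < 1 - r + r * w := by nlinarith
      refine ⟨by positivity, ?_⟩
      rw [div_lt_iff₀ hD]
      nlinarith [mul_pos (mul_pos hr0 h1r) (show (0:ℝ) < 1 - w by linarith)]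
    · rintro ⟨hs0, hsr⟩
      have h1s : (0:ℝ) < 1 - s := by linarith
      refine ⟨(1-r)*s/(r*(1-s)), ⟨by positivity, ?_⟩, ?_⟩
      · rw [div_lt_one (by positivity)]
        nlinarith
      · show r * ((1-r)*s/(r*(1-s))) / (1 - r + r*((1-r)*s/(r*(1-s)))) = s
        rw [show 1 - r + r*((1-r)*s/(r*(1-s))) = (1-r)/(1-s) by field_simp; ring]
        field_simp
  rw [intervalIntegral.integral_of_le hr0.le, MeasureTheory.integral_Ioc_eq_integral_Ioo,
    ← himg, integral_image_eq_integral_abs_deriv_smul (f' := fun w => r*(1-r)/(1-r+r*w)^2)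
      measurableSet_Ioo hφderiv hinj]
  have hcongr : EqOn (fun w => |r*(1-r)/(1-r+r*w)^2| •
        ((r - r*w/(1-r+r*w)) ^ (c-1) * (r*w/(1-r+r*w)) ^ (α-1) *
          (1 - r*w/(1-r+r*w)) ^ (-α - c)))
      (fun w => (r ^ (α + c - 1) * (1-r) ^ (-α)) * (w ^ (α-1) * (1-w) ^ (c-1)))
      (Ioo (0:ℝ) 1) := by
    intro w hw
    obtain ⟨hw0, hw1⟩ := hw
    have hD : (0:ℝ) < 1 - r + r * w := by positivity
    simp only
    rw [show r - r*w/(1-r+r*w) = r*(1-r)*(1-w)/(1-r+r*w) by field_simp; ring,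
      show 1 - r*w/(1-r+r*w) = (1-r)/(1-r+r*w) by field_simp; ring,
      smul_eq_mul, abs_of_pos (by positivity)]
    exact pointwise_chord α c r w hr0 hr1 hw0 hw1
  rw [MeasureTheory.setIntegral_congr_fun measurableSet_Ioo hcongr,
    MeasureTheory.integral_const_mul _ _, ← MeasureTheory.integral_Ioc_eq_integral_Ioo,
    ← intervalIntegral.integral_of_le (by norm_num : (0:ℝ) ≤ 1), real_beta hα hc]
  have hgc := Real.Gamma_pos_of_pos hc
  have hgac := Real.Gamma_pos_of_pos (show (0:ℝ) < α + c by positivity)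
  field_simp
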